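/- Let p, q : ℕ. On ℂ^p × ℂ^q define the hermitian form h((x,y),(x',y')) = ∑_i conj(x i) * x' i − ∑_j conj(y j) * y' j. Let A ∈ Matrix (Fin p) (Fin p) ℂ, B ∈ Matrix (Fin p) (Fin q) ℂ, C ∈ Matrix (Fin q) (Fin p) ℂ, D ∈ Matrix (Fin q) (Fin q) ℂ, and suppose fromBlocks A B C D is invertible. Then the image of the subspace ℂ^p × {0} under the map (x,y) ↦ (A *ᵥ x + B *ᵥ y, C *ᵥ x + D *ᵥ y), namely {(A *ᵥ u, C *ᵥ u) | u ∈ (Fin p → ℂ)}, satisfies h(v,v) > 0 for all nonzero v in it if and only if A is invertible and 1 − (C * A⁻¹)ᴴ * (C * A⁻¹) is positive definite. -/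

import Mathlib

open Matrix
open scoped ComplexOrder

lemma key_dot {n m : ℕ} (Z : Matrix (Fin m) (Fin n) ℂ) (x : Fin n → ℂ) :
    star x ⬝ᵥ ((1 - Zᴴ * Z) *ᵥ x) = star x ⬝ᵥ x - star (Z *ᵥ x) ⬝ᵥ (Z *ᵥ x) := by
  rw [sub_mulVec, one_mulVec, dotProduct_sub, ← mulVec_mulVec, dotProduct_mulVec,
    ← star_mulVec]

theorem stmt_12 (p q : ℕ)
    (h : ((Fin p → ℂ) × (Fin q → ℂ)) → ((Fin p → ℂ) × (Fin q → ℂ)) → ℂ)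
    (hh : ∀ v v', h v v' =
      (∑ i, starRingEnd ℂ (v.1 i) * v'.1 i) - ∑ j, starRingEnd ℂ (v.2 j) * v'.2 j)
    (A : Matrix (Fin p) (Fin p) ℂ) (B : Matrix (Fin p) (Fin q) ℂ)
    (C : Matrix (Fin q) (Fin p) ℂ) (D : Matrix (Fin q) (Fin q) ℂ)
    (hg : IsUnit (Matrix.fromBlocks A B C D)) :
    (∀ v ∈ {v : (Fin p → ℂ) × (Fin q → ℂ) | ∃ u, v = (A *ᵥ u, C *ᵥ u)},
        v ≠ 0 → h v v > 0) ↔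
    (IsUnit A ∧ (1 - (C * A⁻¹).conjTranspose * (C * A⁻¹)).PosDef) := by
  have hdot : ∀ (a : Fin p → ℂ) (c : Fin q → ℂ),
      h (a, c) (a, c) = star a ⬝ᵥ a - star c ⬝ᵥ c := by
    intro a c
    simp [hh, dotProduct]
  constructor
  · intro H
    have hA : IsUnit A := by
      rw [← Matrix.mulVec_injective_iff_isUnit]
      intro x y hxy
      by_contra hne
      have hxy0 : x - y ≠ 0 := sub_ne_zero_of_ne hne
      have hsub : A *ᵥ (x - y) = 0 := by
        rw [mulVec_sub, hxy, sub_self]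
      set u := x - y
      by_cases hCu : C *ᵥ u = 0
      · have hginj := Matrix.mulVec_injective_iff_isUnit.mpr hg
        have h0 : Matrix.fromBlocks A B C D *ᵥ (Sum.elim u 0) =
            Matrix.fromBlocks A B C D *ᵥ 0 := by
          rw [Matrix.fromBlocks_mulVec, mulVec_zero]
          ext (i | j) <;>
            simp [hsub, hCu]
        have h1 := hginj h0
        exact hxy0 (funext fun i => congrFun h1 (Sum.inl i))
      · have hv : ((0 : Fin p → ℂ), C *ᵥ u) ≠ 0 := by
          simp [Prod.ext_iff, hCu]
        have hH := H (0, C *ᵥ u) ⟨u, by rw [hsub]⟩ hv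
        rw [hdot] at hH
        have hle : (0:ℂ) ≤ star (C *ᵥ u) ⬝ᵥ (C *ᵥ u) := dotProduct_star_self_nonneg _
        simp only [star_zero, zero_dotProduct, zero_sub, gt_iff_lt] at hH
        have : (0:ℂ) < 0 := lt_of_lt_of_le hH (by simp [neg_nonpos_of_nonneg hle])
        exact lt_irrefl _ this
    have hAdet : IsUnit A.det := (Matrix.isUnit_iff_isUnit_det A).mp hA
    refine ⟨hA, PosDef.of_dotProduct_mulVec_pos (isHermitian_one.sub (isHermitian_conjTranspose_mul_self _)) ?_⟩
    intro x hx
    have hAu : A *ᵥ (A⁻¹ *ᵥ x) = x := by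
      rw [mulVec_mulVec, Matrix.mul_nonsing_inv _ hAdet, one_mulVec]
    have hCu : (C * A⁻¹) *ᵥ x = C *ᵥ (A⁻¹ *ᵥ x) := by
      rw [mulVec_mulVec]
    have hv : ((A *ᵥ (A⁻¹ *ᵥ x) : Fin p → ℂ), (C *ᵥ (A⁻¹ *ᵥ x) : Fin q → ℂ)) ≠ 0 := by
      rw [hAu]
      simp [Prod.ext_iff, hx]
    have hH := H _ ⟨A⁻¹ *ᵥ x, rfl⟩ hv
    rw [hdot, hAu] at hH
    rw [key_dot, hCu]
    exact hH
  · rintro ⟨hA, hpd⟩ v ⟨u, rfl⟩ hv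
    have hAdet : IsUnit A.det := (Matrix.isUnit_iff_isUnit_det A).mp hA
    have hu : u ≠ 0 := by
      rintro rfl
      simp at hv
    have hx : A *ᵥ u ≠ 0 := fun h0 => hu <| by
      have := Matrix.mulVec_injective_iff_isUnit.mpr hA (h0.trans (mulVec_zero A).symm)
      exact this
    have hCu : (C * A⁻¹) *ᵥ (A *ᵥ u) = C *ᵥ u := by
      rw [mulVec_mulVec, Matrix.mul_assoc, Matrix.nonsing_inv_mul _ hAdet, Matrix.mul_one]
    have := hpd.dotProduct_mulVec_pos hx
    rw [key_dot, hCu] at this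
    rw [hdot]
    exact this
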